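/- The function g defined on [1,∞) by g(x) = (y + sin y)/2 − x·(y − sin y)/2, where y = arccos((x−1)/(x+1)), is monotonically decreasing. -/

import Mathlib

noncomputable def g (x : ℝ) : ℝ :=
  (Real.arccos ((x - 1) / (x + 1)) + Real.sin (Real.arccos ((x - 1) / (x + 1)))) / 2
    - x * (Real.arccos ((x - 1) / (x + 1)) - Real.sin (Real.arccos ((x - 1) / (x + 1)))) / 2

open Real in
lemma g_hasDerivAt {x : ℝ} (hx : 1 < x) :
    HasDerivAt g
      (-(arccos ((x - 1) / (x + 1)) - Real.sin (arccos ((x - 1) / (x + 1)))) / 2) x := by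
  have hx1 : x + 1 ≠ 0 := by linarith
  set u : ℝ := (x - 1) / (x + 1) with hu
  have hupos : 0 < u := div_pos (by linarith) (by linarith)
  have hult : u < 1 := (div_lt_one (by linarith)).2 (by linarith)
  have hune1 : u ≠ 1 := ne_of_lt hult
  have hunem1 : u ≠ -1 := by linarith
  have hud : HasDerivAt (fun x : ℝ => (x - 1) / (x + 1)) (2 / (x + 1) ^ 2) x := by
    have h1 : HasDerivAt (fun x : ℝ => x - 1) 1 x := (hasDerivAt_id x).sub_const 1
    have h2 : HasDerivAt (fun x : ℝ => x + 1) 1 x := (hasDerivAt_id x).add_const 1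
    have := h1.div h2 hx1
    refine this.congr_deriv ?_
    ring
  set d : ℝ := -(1 / √(1 - u ^ 2)) * (2 / (x + 1) ^ 2) with hd
  have hy : HasDerivAt (fun x : ℝ => arccos ((x - 1) / (x + 1))) d x :=
    (Real.hasDerivAt_arccos hunem1 hune1).comp (h₂ := arccos) (h := fun x : ℝ => (x - 1) / (x + 1)) x hud
  have hsin : HasDerivAt (fun x : ℝ => Real.sin (arccos ((x - 1) / (x + 1)))) (cos (arccos u) * d) x :=
    (Real.hasDerivAt_sin _).comp x hy
  rw [Real.cos_arccos (by linarith) hult.le] at hsin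
  have hgd := (((hy.add hsin).div_const 2).sub
      (((hasDerivAt_id x).mul (hy.sub hsin)).div_const 2))
  simp only [id_eq] at hgd
  have huxu : u * (x + 1) = x - 1 := div_mul_cancel₀ _ hx1
  have key : 1 + u = x * (1 - u) := by linear_combination huxu
  refine hgd.congr_deriv ?_
  simp only [Pi.sub_apply]
  linear_combination (d / 2) * key

theorem g_antitone : AntitoneOn g (Set.Ici (1 : ℝ)) := by
  have hcont : ContinuousOn g (Set.Ici 1) := by
    have h1 : ContinuousOn (fun x : ℝ => (x - 1) / (x + 1)) (Set.Ici 1) := by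
      apply ContinuousOn.div (by fun_prop) (by fun_prop)
      intro x hx
      simp only [Set.mem_Ici] at hx
      intro h; linarith
    have h2 : ContinuousOn (fun x : ℝ => Real.arccos ((x - 1) / (x + 1))) (Set.Ici 1) :=
      Real.continuous_arccos.comp_continuousOn h1
    have h3 : ContinuousOn (fun x : ℝ => Real.sin (Real.arccos ((x - 1) / (x + 1)))) (Set.Ici 1) :=
      Real.continuous_sin.comp_continuousOn h2
    unfold g
    exact (((h2.add h3).div_const 2).sub (((continuousOn_id.mul (h2.sub h3))).div_const 2))
  apply antitoneOn_of_deriv_nonpos (convex_Ici 1) hcont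
  · intro x hx
    rw [interior_Ici] at hx
    exact (g_hasDerivAt hx).differentiableAt.differentiableWithinAt
  · intro x hx
    rw [interior_Ici] at hx
    rw [(g_hasDerivAt hx).deriv]
    have h1 : Real.sin (Real.arccos ((x - 1) / (x + 1))) ≤ Real.arccos ((x - 1) / (x + 1)) :=
      Real.sin_le (Real.arccos_nonneg _)
    have h2 : (0:ℝ) < 2 := by norm_num
    apply div_nonpos_of_nonpos_of_nonneg _ h2.le
    linarith
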